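/- Let p be a prime and A ⊆ 𝔽_p with |A| > 1. Then there exists d ∈ 𝔽_p with d ≠ 0 such that g(d·A) ≥ 2p/|A| − 2; equivalently, there exists d ∈ 𝔽_p, d ≠ 0, with |A| · (g(d·A) + 2) ≥ 2p. -/

import Mathlib

/-- The largest gap of `A ⊆ 𝔽_p`: the largest `g` such that some translate of the
residues of `{1, …, g}` is disjoint from `A`. -/
noncomputable def gap (p : ℕ) (A : Finset (ZMod p)) : ℕ :=
  sSup {g : ℕ | ∃ t : ZMod p, ∀ i : ℕ, 1 ≤ i → i ≤ g → ((i : ZMod p) + t) ∉ A}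

namespace GapProofAux

open Polynomial Finset

variable {p : ℕ} [hpf : Fact p.Prime]

lemma le_gap {A : Finset (ZMod p)} (hA : A.Nonempty) {k : ℕ} {t : ZMod p}
    (h : ∀ i : ℕ, 1 ≤ i → i ≤ k → ((i : ZMod p) + t) ∉ A) : k ≤ gap p A := by
  haveI : NeZero p := ⟨hpf.out.ne_zero⟩
  apply le_csSup
  · refine ⟨p - 1, fun g hg => ?_⟩
    by_contra hgp
    push_neg at hgp
    obtain ⟨t', ht'⟩ := hg
    obtain ⟨b, hb⟩ := hA
    have hp1 : 0 < p := hpf.out.pos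
    set z := b - t' with hz
    by_cases hz0 : z = 0
    · have hmem : ((p : ℕ) : ZMod p) + t' ∉ A := ht' p hp1 (by omega)
      apply hmem
      have : b = t' := by
        have := hz0
        rw [hz, sub_eq_zero] at this
        exact this
      rw [ZMod.natCast_self, zero_add, ← this]
      exact hb
    · have hv : ((z.val : ℕ) : ZMod p) = z := ZMod.natCast_rightInverse z
      have hzv1 : 1 ≤ z.val := by
        rcases Nat.eq_zero_or_pos z.val with h0 | h0
        · exfalso; apply hz0; rw [← hv, h0, Nat.cast_zero]
        · exact h0
      have hzvp : z.val ≤ p - 1 := by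
        have := ZMod.val_lt z
        omega
      have hmem : ((z.val : ℕ) : ZMod p) + t' ∉ A := ht' z.val hzv1 (by omega)
      apply hmem
      rw [hv, hz, sub_add_cancel]
      exact hb
  · exact ⟨t, h⟩

lemma sum_units_pow (m : ℕ) :
    ∑ u : (ZMod p)ˣ, ((u : ZMod p)) ^ m = if (p - 1) ∣ m then (-1 : ZMod p) else 0 := by
  classical
  have h := FiniteField.sum_pow_units (ZMod p) m
  rw [ZMod.card] at h
  exact h

lemma ps_extract {N R : ℕ} (hp3 : 3 ≤ p)
    (hRp : R ≤ p - 2) (hRN : R ≤ N) (hN : N ≤ R + (p - 1))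
    {g : Polynomial (ZMod p)} (hdeg : g.natDegree ≤ N)
    (hvan : ∀ u : (ZMod p)ˣ, g.eval ((u : ZMod p)) = 0) :
    g.coeff R + g.coeff (R + (p - 1)) = 0 := by
  classical
  have key2 : ∑ j ∈ range (N + 1), g.coeff j *
      (if (p - 1) ∣ (p - 1 - R + j) then (-1 : ZMod p) else 0) = (0 : ZMod p) := by
    calc ∑ j ∈ range (N + 1), g.coeff j *
          (if (p - 1) ∣ (p - 1 - R + j) then (-1 : ZMod p) else 0)
        = ∑ j ∈ range (N + 1), ∑ u : (ZMod p)ˣ, g.coeff j * ((u : ZMod p)) ^ (p - 1 - R + j) := by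
          apply Finset.sum_congr rfl
          intro j _
          rw [← Finset.mul_sum, sum_units_pow]
      _ = ∑ u : (ZMod p)ˣ, ∑ j ∈ range (N + 1), g.coeff j * ((u : ZMod p)) ^ (p - 1 - R + j) :=
          Finset.sum_comm
      _ = ∑ u : (ZMod p)ˣ, ((u : ZMod p)) ^ (p - 1 - R) * g.eval ((u : ZMod p)) := by
          apply Finset.sum_congr rfl
          intro u _
          rw [eval_eq_sum_range' (Nat.lt_succ_of_le hdeg), Finset.mul_sum]
          apply Finset.sum_congr rfl
          intro j _
          rw [pow_add]
          ring
      _ = 0 := by simp [hvan]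
  have hchar : ∀ j ∈ range (N + 1),
      g.coeff j * (if (p - 1) ∣ (p - 1 - R + j) then (-1 : ZMod p) else 0)
        = (if j = R then -g.coeff j else 0) + (if j = R + (p - 1) then -g.coeff j else 0) := by
    intro j hj
    rw [Finset.mem_range] at hj
    by_cases hd : (p - 1) ∣ (p - 1 - R + j)
    · obtain ⟨w, hw⟩ := hd
      have hwle : w ≤ 2 := by
        by_contra hgt
        push_neg at hgt
        have h3 : (p - 1) * 3 ≤ (p - 1) * w := Nat.mul_le_mul_left _ (by omega)
        omega
      have hjcases : j = R ∨ j = R + (p - 1) := by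
        interval_cases w <;> omega
      have hd' : (p - 1) ∣ (p - 1 - R + j) := ⟨w, hw⟩
      rcases hjcases with rfl | rfl
      · rw [if_pos hd', if_pos rfl, if_neg (by omega)]
        ring
      · rw [if_pos hd', if_neg (by omega), if_pos rfl]
        ring
    · have hj1 : j ≠ R := by rintro rfl; exact hd ⟨1, by omega⟩
      have hj2 : j ≠ R + (p - 1) := by rintro rfl; exact hd ⟨2, by omega⟩
      rw [if_neg hd, if_neg hj1, if_neg hj2]
      ring
  rw [Finset.sum_congr rfl hchar, Finset.sum_add_distrib] at key2
  rw [Finset.sum_ite_eq' (range (N + 1)) R (fun j => -g.coeff j),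
      Finset.sum_ite_eq' (range (N + 1)) (R + (p - 1)) (fun j => -g.coeff j)] at key2
  rw [if_pos (Finset.mem_range.mpr (by omega))] at key2
  by_cases hmem : R + (p - 1) ∈ range (N + 1)
  · rw [if_pos hmem] at key2
    linear_combination -key2
  · rw [if_neg hmem] at key2
    have hcz : g.coeff (R + (p - 1)) = 0 := by
      apply coeff_eq_zero_of_natDegree_lt
      rw [Finset.mem_range] at hmem
      omega
    rw [hcz]
    linear_combination -key2

lemma lin_natDegree {b e : Polynomial (ZMod p)} (hb : b ≠ 0) :
    (Polynomial.C b * Polynomial.X + Polynomial.C e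
      : Polynomial (Polynomial (ZMod p))).natDegree = 1 :=
  natDegree_linear hb

lemma tri_coeff {ι : Type*} (s : Finset ι) (b e : ι → Polynomial (ZMod p))
    (hb : ∀ t, (b t).natDegree ≤ 1) (he : ∀ t, (e t).natDegree = 0) :
    ∀ j, (((∏ t ∈ s, (Polynomial.C (b t) * Polynomial.X + Polynomial.C (e t)))
        : Polynomial (Polynomial (ZMod p))).coeff j).natDegree ≤ j := by
  classical
  induction s using Finset.cons_induction with
  | empty =>
    intro j
    rcases Nat.eq_zero_or_pos j with rfl | hj
    · simp
    · rw [Finset.prod_empty, coeff_one, if_neg (by omega)]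
      simp
  | cons a s ha ih =>
    intro j
    rw [Finset.prod_cons]
    have hrw : (Polynomial.C (b a) * Polynomial.X + Polynomial.C (e a)) *
          ∏ t ∈ s, (Polynomial.C (b t) * Polynomial.X + Polynomial.C (e t))
        = Polynomial.C (b a) * ((∏ t ∈ s, (Polynomial.C (b t) * Polynomial.X + Polynomial.C (e t))) * Polynomial.X)
          + Polynomial.C (e a) * ∏ t ∈ s, (Polynomial.C (b t) * Polynomial.X + Polynomial.C (e t)) := by
      ring
    rw [hrw, coeff_add, coeff_C_mul, coeff_C_mul]
    refine le_trans (natDegree_add_le _ _) ?_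
    rcases j with _ | j
    · rw [coeff_mul_X_zero]
      simp only [mul_zero, natDegree_zero, max_le_iff]
      constructor
      · omega
      · refine le_trans (natDegree_mul_le) ?_
        rw [he a]
        simpa using ih 0
    · rw [coeff_mul_X]
      rw [max_le_iff]
      constructor
      · refine le_trans (natDegree_mul_le) ?_
        have h1 := ih j
        have h2 := hb a
        omega
      · refine le_trans (natDegree_mul_le) ?_
        have := ih (j + 1)
        rw [he a]
        omega

lemma pairwise_cop (s : Finset (ZMod p)) :
    (↑s : Set (ZMod p)).Pairwise (Function.onFun IsCoprime fun a => (X - C a : Polynomial (ZMod p))) := by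
  intro a _ b _ hab
  exact isCoprime_X_sub_C_of_isUnit_sub (isUnit_iff_ne_zero.mpr (sub_ne_zero.mpr hab))

lemma prod_X_sub_C_univ :
    ∏ c : ZMod p, (X - C c) = (X ^ p - X : Polynomial (ZMod p)) := by
  classical
  have hp1 : 1 < p := hpf.out.one_lt
  have hmonic : (X ^ p - X : Polynomial (ZMod p)).Monic := by
    apply monic_X_pow_sub
    rw [degree_X]
    exact_mod_cast hp1
  have hdvd : (∏ c : ZMod p, (X - C c)) ∣ (X ^ p - X : Polynomial (ZMod p)) := by
    apply Finset.prod_dvd_of_coprime ((pairwise_cop (univ : Finset (ZMod p))))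
    intro c _
    rw [dvd_iff_isRoot]
    simp [IsRoot, ZMod.pow_card]
  have hmp : (∏ c : ZMod p, (X - C c) : Polynomial (ZMod p)).Monic :=
    monic_prod_of_monic _ _ fun c _ => monic_X_sub_C c
  have hdeg1 : (∏ c : ZMod p, (X - C c) : Polynomial (ZMod p)).natDegree = p := by
    rw [natDegree_prod _ _ fun c _ => X_sub_C_ne_zero c]
    simp [natDegree_X_sub_C, ZMod.card]
  have hdeg2 : (X ^ p - X : Polynomial (ZMod p)).natDegree = p := by
    apply le_antisymm
    · refine le_trans (natDegree_sub_le _ _) ?_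
      simp [natDegree_X_pow]
      omega
    · apply le_natDegree_of_ne_zero
      rw [coeff_sub, coeff_X_pow, if_pos rfl, coeff_X, if_neg (by omega)]
      simp
  obtain ⟨u, hu⟩ := hdvd
  have hu0 : u ≠ 0 := by
    rintro rfl
    rw [mul_zero] at hu
    exact hmonic.ne_zero hu
  have hudeg : u.natDegree = 0 := by
    have := natDegree_mul hmp.ne_zero hu0
    rw [← hu, hdeg2, hdeg1] at this
    omega
  obtain ⟨c, rfl⟩ : ∃ c, u = C c := ⟨u.coeff 0, eq_C_of_natDegree_eq_zero hudeg⟩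
  have hc : c = 1 := by
    have := congrArg leadingCoeff hu
    rw [hmonic.leadingCoeff, leadingCoeff_mul, hmp.leadingCoeff, one_mul, leadingCoeff_C] at this
    exact this.symm
  rw [hc, map_one, mul_one] at hu
  exact hu.symm

lemma vanish_dvd (ψ : Polynomial (ZMod p)) (h : ∀ y, ψ.eval y = 0) :
    (X ^ p - X : Polynomial (ZMod p)) ∣ ψ := by
  classical
  rw [← prod_X_sub_C_univ]
  apply Finset.prod_dvd_of_coprime ((pairwise_cop (univ : Finset (ZMod p))))
  intro c _
  rw [dvd_iff_isRoot]
  exact h c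

lemma pdvd (A : Finset (ZMod p)) :
    ∀ m : ℕ, m < p → ∀ V : Polynomial (ZMod p),
      C ((m : ℕ) : ZMod p) * V * derivative (∏ a ∈ A, (X - C a)) =
        derivative V * ∏ a ∈ A, (X - C a) → (∏ a ∈ A, (X - C a)) ^ m ∣ V := by
  classical
  intro m
  induction m with
  | zero => intro _ V _; simpa using one_dvd V
  | succ m ih =>
    intro hm V hrel
    set P : Polynomial (ZMod p) := ∏ a ∈ A, (X - C a) with hPdef
    have hP0 : P ≠ 0 := by
      rw [hPdef]
      exact Finset.prod_ne_zero_iff.mpr fun a _ => X_sub_C_ne_zero a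
    have hPV : P ∣ V := by
      rw [hPdef]
      apply Finset.prod_dvd_of_coprime (pairwise_cop A)
      intro a ha
      have hd1 : (X - C a) ∣ derivative V * P := (Finset.dvd_prod_of_mem _ ha).mul_left _
      rw [← hrel] at hd1
      have hpr : Prime (X - C a : Polynomial (ZMod p)) := prime_X_sub_C a
      have hnotP' : ¬ (X - C a) ∣ derivative P := by
        rw [dvd_iff_isRoot]
        intro hroot
        have hsplit : P = (X - C a) * ∏ b ∈ A.erase a, (X - C b) :=
          (Finset.mul_prod_erase A _ ha).symm
        rw [hsplit, derivative_mul, derivative_sub, derivative_X, derivative_C, sub_zero,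
          one_mul] at hroot
        have : (∏ b ∈ A.erase a, (a - b)) = 0 := by
          have := hroot
          simp only [IsRoot, eval_add, eval_mul, eval_sub, eval_X, eval_C, sub_self,
            zero_mul, add_zero, eval_prod] at this
          exact this
        obtain ⟨b, hb, h0⟩ := Finset.prod_eq_zero_iff.mp this
        have : b = a := by
          have := sub_eq_zero.mp h0
          exact this.symm
        exact (Finset.ne_of_mem_erase hb) this
      have hre : (X - C a) ∣ C (((m + 1 : ℕ)) : ZMod p) * V * derivative P := hd1
      rcases hpr.dvd_mul.mp hre with h1 | h1
      · rcases hpr.dvd_mul.mp h1 with h2 | h2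
        · exfalso
          rw [dvd_iff_isRoot] at h2
          have : (((m + 1 : ℕ)) : ZMod p) = 0 := by simpa [IsRoot] using h2
          rw [ZMod.natCast_eq_zero_iff] at this
          have := Nat.le_of_dvd (by omega) this
          omega
        · exact h2
      · exact absurd h1 hnotP'
    obtain ⟨V₁, rfl⟩ := hPV
    have hrel₁ : C ((m : ℕ) : ZMod p) * V₁ * derivative P = derivative V₁ * P := by
      have hcan : C (((m + 1 : ℕ)) : ZMod p) * V₁ * derivative P
          = derivative P * V₁ + P * derivative V₁ := by
        apply mul_left_cancel₀ hP0
        have hD : derivative (P * V₁) = derivative P * V₁ + P * derivative V₁ := derivative_mul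
        calc P * (C (((m + 1 : ℕ)) : ZMod p) * V₁ * derivative P)
            = C (((m + 1 : ℕ)) : ZMod p) * (P * V₁) * derivative P := by ring
          _ = derivative (P * V₁) * P := hrel
          _ = (derivative P * V₁ + P * derivative V₁) * P := by rw [hD]
          _ = P * (derivative P * V₁ + P * derivative V₁) := by ring
      have hcast : (((m + 1 : ℕ)) : ZMod p) = ((m : ℕ) : ZMod p) + 1 := by push_cast; ring
      rw [hcast, map_add, map_one] at hcan
      linear_combination hcan
    have hd := ih (by omega) V₁ hrel₁
    rw [pow_succ']
    exact mul_dvd_mul_left P hd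

lemma M_natDegree : (X ^ p - X : Polynomial (ZMod p)).natDegree = p := by
  have hp1 : 1 < p := hpf.out.one_lt
  apply le_antisymm
  · refine le_trans (natDegree_sub_le _ _) ?_
    simp [natDegree_X_pow]
    omega
  · apply le_natDegree_of_ne_zero
    rw [coeff_sub, coeff_X_pow, if_pos rfl, coeff_X, if_neg (by omega)]
    simp

lemma M_ne_zero : (X ^ p - X : Polynomial (ZMod p)) ≠ 0 := by
  intro h
  have h1 := M_natDegree (p := p)
  rw [h] at h1
  have hp1 : 1 < p := hpf.out.one_lt
  simp at h1
  omega

lemma main_case {A : Finset (ZMod p)} (hA2 : 2 ≤ A.card) (hAp : A.card < p) {k : ℕ}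
    (hk1 : 1 ≤ k) (hkp : k ≤ p - 2) (hnk1 : A.card * (k + 1) ≤ 2 * p - 1)
    (hcov : ∀ (u : (ZMod p)ˣ) (y₀ : ZMod p), ∃ a ∈ A, ∃ i ∈ Finset.Icc 1 k,
        (a - y₀) * (u : ZMod p) = ((i : ℕ) : ZMod p)) : False := by
  classical
  set n := A.card with hn
  have hp3 : 3 ≤ p := by omega
  set s : Finset (ZMod p × ℕ) := A ×ˢ Finset.Icc 1 k with hs
  have hcard : s.card = n * k := by
    rw [hs, Finset.card_product, Nat.card_Icc]
    simp [← hn]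
  set bf : ZMod p × ℕ → Polynomial (ZMod p) := fun t => C t.1 - X with hbf
  set ef : ZMod p × ℕ → Polynomial (ZMod p) := fun t => - C ((t.2 : ZMod p)) with hef
  set G : Polynomial (Polynomial (ZMod p)) :=
    ∏ t ∈ s, (C (bf t) * X + C (ef t)) with hG
  have hbne : ∀ t : ZMod p × ℕ, bf t ≠ 0 := by
    intro t
    rw [hbf]
    intro h
    have := congrArg (fun qq => Polynomial.coeff qq 1) h
    simp [coeff_C] at this
  have hbdeg : ∀ t : ZMod p × ℕ, (bf t).natDegree ≤ 1 := by
    intro t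
    rw [hbf]
    refine le_trans (natDegree_sub_le _ _) ?_
    simp
  have hedeg : ∀ t : ZMod p × ℕ, (ef t).natDegree = 0 := by
    intro t
    rw [hef]
    simp
  have hfdeg : ∀ t ∈ s,
      (C (bf t) * X + C (ef t) : Polynomial (Polynomial (ZMod p))).natDegree = 1 :=
    fun t _ => natDegree_linear (hbne t)
  have hfne : ∀ t ∈ s, (C (bf t) * X + C (ef t) : Polynomial (Polynomial (ZMod p))) ≠ 0 := by
    intro t ht h0
    have h1 := hfdeg t ht
    rw [h0] at h1
    simp at h1
  have hGdeg : G.natDegree = n * k := by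
    rw [hG, natDegree_prod _ _ hfne]
    rw [Finset.sum_congr rfl hfdeg]
    simp [hcard]
  have hGtop : G.coeff (n * k) = ∏ t ∈ s, bf t := by
    have h1 : G.coeff (n * k) = G.leadingCoeff := by rw [leadingCoeff, hGdeg]
    rw [h1, hG, leadingCoeff_prod]
    apply Finset.prod_congr rfl
    intro t ht
    exact leadingCoeff_linear (hbne t)
  have hprod_b : ∏ t ∈ s, bf t = ∏ a ∈ A, (C a - X) ^ k := by
    rw [hs, hbf, Finset.prod_product]
    apply Finset.prod_congr rfl
    intro a _
    simp [Finset.prod_const, Nat.card_Icc]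
  have hvan : ∀ y₀ : ZMod p, ∀ u : (ZMod p)ˣ,
      (G.map (evalRingHom y₀)).eval ((u : ZMod p)) = 0 := by
    intro y₀ u
    rw [eval_map, hG, eval₂_finset_prod]
    obtain ⟨a, ha, i, hi, hEq⟩ := hcov u y₀
    apply Finset.prod_eq_zero (Finset.mk_mem_product ha hi)
    rw [hbf, hef]
    simp only [eval₂_add, eval₂_mul, eval₂_C, eval₂_X, coe_evalRingHom, eval_sub, eval_C,
      eval_X, eval_neg]
    linear_combination hEq
  have hmapdeg : ∀ y₀ : ZMod p, (G.map (evalRingHom y₀)).natDegree ≤ n * k :=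
    fun y₀ => le_trans natDegree_map_le (le_of_eq hGdeg)
  rcases Nat.lt_or_ge (n * k) p with hsmall | hbig
  · rcases Nat.lt_or_ge (n * k) (p - 1) with hvs | hvs2
    · -- n * k ≤ p - 2
      have hcompl : (Aᶜ : Finset (ZMod p)).Nonempty := by
        rw [← Finset.card_pos, Finset.card_compl, ZMod.card]
        omega
      obtain ⟨y₀, hy₀c⟩ := hcompl
      have hy₀ : y₀ ∉ A := Finset.mem_compl.mp hy₀c
      have hext := ps_extract hp3 (R := n * k) (N := n * k) (by omega) le_rfl (by omega)
          (hmapdeg y₀) (hvan y₀)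
      have hz : (G.map (evalRingHom y₀)).coeff (n * k + (p - 1)) = 0 := by
        apply coeff_eq_zero_of_natDegree_lt
        have := hmapdeg y₀
        omega
      rw [hz, add_zero, coeff_map, hGtop, hprod_b, map_prod] at hext
      obtain ⟨a, ha, h0⟩ := Finset.prod_eq_zero_iff.mp hext
      rw [map_pow] at h0
      have h00 : (evalRingHom y₀) (C a - X) = 0 :=
        (pow_eq_zero_iff (show k ≠ 0 by omega)).mp h0
      simp only [coe_evalRingHom, eval_sub, eval_C, eval_X] at h00
      apply hy₀
      have : a = y₀ := by linear_combination h00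
      rwa [this] at ha
    · -- n * k = p - 1
      have heq : n * k = p - 1 := by omega
      obtain ⟨a₀, ha₀⟩ : A.Nonempty := Finset.card_pos.mp (by omega)
      have hext := ps_extract hp3 (R := 0) (N := n * k) (by omega) (by omega) (by omega)
          (hmapdeg a₀) (hvan a₀)
      rw [zero_add, coeff_map, coeff_map] at hext
      have hc0 : G.coeff 0 = ∏ t ∈ s, ef t := by
        rw [coeff_zero_eq_eval_zero, hG, eval_prod]
        apply Finset.prod_congr rfl
        intro t _
        simp
      have hcnk : G.coeff (p - 1) = ∏ a ∈ A, (C a - X) ^ k := by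
        rw [← heq, hGtop, hprod_b]
      rw [hcnk, hc0, map_prod, map_prod] at hext
      have h2 : ∏ a ∈ A, (evalRingHom a₀) ((C a - X) ^ k) = 0 := by
        apply Finset.prod_eq_zero ha₀
        rw [map_pow]
        simp only [coe_evalRingHom, eval_sub, eval_C, eval_X, sub_self]
        exact zero_pow (by omega)
      rw [h2, add_zero] at hext
      obtain ⟨t, ht, h0⟩ := Finset.prod_eq_zero_iff.mp hext
      rw [hef] at h0
      simp only [coe_evalRingHom, eval_neg, eval_C, neg_eq_zero] at h0
      rw [ZMod.natCast_eq_zero_iff] at h0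
      rw [hs, Finset.mem_product, Finset.mem_Icc] at ht
      have := Nat.le_of_dvd (by omega) h0
      omega
  · -- n * k ≥ p : the Stepanov argument
    set R := n * k - (p - 1) with hR
    have hnk3 : n * k ≤ 2 * p - 3 := by
      have h1 : n * (k + 1) = n * k + n := by ring
      omega
    have hR1 : 1 ≤ R := by omega
    have hR2 : R ≤ p - 2 := by omega
    have hRnk : R + (p - 1) = n * k := by omega
    set P : Polynomial (ZMod p) := ∏ a ∈ A, (X - C a) with hP
    have hPmonic : P.Monic := monic_prod_of_monic _ _ fun a _ => monic_X_sub_C a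
    have hPdeg : P.natDegree = n := by
      rw [hP, natDegree_prod _ _ fun a _ => X_sub_C_ne_zero a]
      simp [← hn]
    have hP0 : P ≠ 0 := hPmonic.ne_zero
    set η : ZMod p := (-1 : ZMod p) ^ (n * k) with hη
    have hη2 : η * η = 1 := by
      rw [hη, ← pow_add, show n * k + n * k = 2 * (n * k) by ring, pow_mul, neg_one_sq, one_pow]
    have hsign : ∏ a ∈ A, (C a - X) ^ k = C η * P ^ k := by
      calc ∏ a ∈ A, (C a - X) ^ k
          = ∏ a ∈ A, ((-1 : Polynomial (ZMod p)) ^ k * (X - C a) ^ k) := by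
            apply Finset.prod_congr rfl
            intro a _
            rw [← mul_pow]
            congr 1
            ring
        _ = ((-1 : Polynomial (ZMod p)) ^ k) ^ n * ∏ a ∈ A, (X - C a) ^ k := by
            rw [Finset.prod_mul_distrib, Finset.prod_const, hn]
        _ = C η * P ^ k := by
            rw [← pow_mul, hP, ← Finset.prod_pow]
            congr 1
            rw [hη, map_pow, map_neg, map_one, Nat.mul_comm]
    have hψ : ∀ y₀ : ZMod p, (G.coeff R).eval y₀ + η * (P ^ k).eval y₀ = 0 := by
      intro y₀
      have hext := ps_extract hp3 (R := R) (N := n * k) hR2 (by omega) (by omega)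
          (hmapdeg y₀) (hvan y₀)
      rw [hRnk, coeff_map, coeff_map, hGtop, hprod_b, hsign] at hext
      simpa [coe_evalRingHom] using hext
    set Γ : Polynomial (ZMod p) := -(C η * G.coeff R) with hΓ
    set φ : Polynomial (ZMod p) := P ^ k - Γ with hφ
    have hφvan : ∀ y₀, φ.eval y₀ = 0 := by
      intro y₀
      have h1 := hψ y₀
      rw [hφ, hΓ]
      simp only [eval_sub, eval_neg, eval_mul, eval_C]
      linear_combination η * h1 - (P ^ k).eval y₀ * hη2
    obtain ⟨V, hV⟩ := vanish_dvd φ hφvan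
    have hPkdeg : (P ^ k).natDegree = n * k := by
      rw [hPmonic.natDegree_pow, hPdeg, Nat.mul_comm]
    have hΓdeg : Γ.natDegree ≤ R := by
      rw [hΓ, natDegree_neg]
      refine le_trans (natDegree_C_mul_le _ _) ?_
      rw [hG]
      exact tri_coeff s bf ef hbdeg hedeg R
    have hφcoeff : φ.coeff (n * k) = 1 := by
      have h1 : (P ^ k).coeff (n * k) = 1 := by
        have h2 := (hPmonic.pow k).coeff_natDegree
        rwa [hPkdeg] at h2
      have h2 : Γ.coeff (n * k) = 0 :=
        coeff_eq_zero_of_natDegree_lt (lt_of_le_of_lt hΓdeg (by omega))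
      rw [hφ, coeff_sub, h1, h2, sub_zero]
    have hφ0 : φ ≠ 0 := by
      intro h
      rw [h] at hφcoeff
      simp at hφcoeff
    have hV0 : V ≠ 0 := by
      rintro rfl
      rw [mul_zero] at hV
      exact hφ0 hV
    have hφdeg : φ.natDegree = n * k := by
      apply le_antisymm
      · rw [hφ]
        refine le_trans (natDegree_sub_le _ _) ?_
        rw [max_le_iff, hPkdeg]
        exact ⟨le_rfl, by omega⟩
      · apply le_natDegree_of_ne_zero
        rw [hφcoeff]
        exact one_ne_zero
    have hVdeg : V.natDegree = n * k - p := by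
      have h1 := natDegree_mul (M_ne_zero (p := p)) hV0
      rw [← hV, hφdeg, M_natDegree] at h1
      omega
    set B : Polynomial (ZMod p) := Γ - X * V with hB
    have hV' : P ^ k - Γ = (X ^ p - X) * V := by rw [← hφ]; exact hV
    have hkey : P ^ k = B + X ^ p * V := by
      rw [hB]
      linear_combination hV'
    have hBdeg : B.natDegree ≤ (n * k - p) + 1 := by
      rw [hB]
      refine le_trans (natDegree_sub_le _ _) ?_
      rw [max_le_iff]
      constructor
      · omega
      · rw [natDegree_mul X_ne_zero hV0, natDegree_X, hVdeg]
        omega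
    have hderC : derivative (X ^ p * V : Polynomial (ZMod p)) = X ^ p * derivative V := by
      rw [derivative_mul, derivative_X_pow]
      have hz : ((p : ℕ) : ZMod p) = 0 := ZMod.natCast_self p
      rw [hz, map_zero, zero_mul, zero_mul, zero_add]
    have hderiv : C ((k : ℕ) : ZMod p) * P ^ (k - 1) * derivative P
        = derivative B + X ^ p * derivative V := by
      have h1 := congrArg derivative hkey
      rw [derivative_pow, derivative_add, hderC] at h1
      exact h1
    set E : Polynomial (ZMod p) := C ((k : ℕ) : ZMod p) * V * derivative P - derivative V * P
      with hE
    set W : Polynomial (ZMod p) := V * derivative B - derivative V * B with hW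
    have hk1' : k - 1 + 1 = k := by omega
    have hWeq : P ^ (k - 1) * E = W := by
      rw [hE, hW]
      calc P ^ (k - 1) * (C ((k : ℕ) : ZMod p) * V * derivative P - derivative V * P)
          = V * (C ((k : ℕ) : ZMod p) * P ^ (k - 1) * derivative P)
            - derivative V * (P ^ (k - 1) * P) := by ring
        _ = V * (derivative B + X ^ p * derivative V) - derivative V * (B + X ^ p * V) := by
            rw [hderiv, ← pow_succ, hk1', hkey]
        _ = V * derivative B - derivative V * B := by ring
    by_cases hEzero : E = 0
    · have hrel : C ((k : ℕ) : ZMod p) * V * derivative P = derivative V * P := by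
        rw [hE] at hEzero
        linear_combination hEzero
      have hdvd : P ^ k ∣ V := by
        rw [hP]
        exact pdvd A k (by omega) V (by rw [← hP]; exact hrel)
      have hled := natDegree_le_of_dvd hdvd hV0
      rw [hPkdeg, hVdeg] at hled
      omega
    · have hWne : W ≠ 0 := by
        rw [← hWeq]
        exact mul_ne_zero (pow_ne_zero _ hP0) hEzero
      have hWge : (k - 1) * n ≤ W.natDegree := by
        rw [← hWeq, natDegree_mul (pow_ne_zero _ hP0) hEzero, hPmonic.natDegree_pow, hPdeg]
        omega
      have hWle : W.natDegree ≤ 2 * (n * k - p) := by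
        rw [hW]
        refine le_trans (natDegree_sub_le _ _) ?_
        rw [max_le_iff]
        constructor
        · refine le_trans natDegree_mul_le ?_
          have h1 : (derivative B).natDegree ≤ n * k - p :=
            le_trans (natDegree_derivative_le B) (by omega)
          omega
        · rcases Nat.eq_zero_or_pos (n * k - p) with hz | hpos
          · have hVc : V = C (V.coeff 0) := eq_C_of_natDegree_eq_zero (by omega)
            rw [hVc, derivative_C, zero_mul, natDegree_zero]
            omega
          · refine le_trans natDegree_mul_le ?_
            have h1 : (derivative V).natDegree ≤ (n * k - p) - 1 :=
              le_trans (natDegree_derivative_le V) (by omega)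
            omega
      have hkn : (k - 1) * n + n = k * n := by
        have h1 : (k - 1) + 1 = k := by omega
        calc (k - 1) * n + n = ((k - 1) + 1) * n := by ring
          _ = k * n := by rw [h1]
      have hmulc : k * n = n * k := Nat.mul_comm _ _
      have hsum : n * (k + 1) = n * k + n := by ring
      omega


end GapProofAux

theorem stmt_0 (p : ℕ) (hp : p.Prime) (A : Finset (ZMod p)) (hA : 1 < A.card) :
    ∃ d : ZMod p, d ≠ 0 ∧
      A.card * (gap p (A.image (fun a => d * a)) + 2) ≥ 2 * p := by
  haveI hpf : Fact p.Prime := ⟨hp⟩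
  haveI : Fact (1 < p) := ⟨hp.one_lt⟩
  classical
  rcases Nat.lt_or_ge A.card p with hAp | hAp
  · set n := A.card with hn
    set q := (2 * p + n - 1) / n with hq
    have hn0 : 0 < n := by omega
    have hdm := Nat.div_add_mod (2 * p + n - 1) n
    rw [← hq] at hdm
    have hmlt : (2 * p + n - 1) % n < n := Nat.mod_lt _ hn0
    have hq1 : n * q ≤ 2 * p + n - 1 := by omega
    have hq2 : 2 * p + n - 1 < n * q + n := by omega
    have hp2 : 2 ≤ p := hp.two_le
    have hn2 : 2 ≤ n := hA
    have hnq : 2 * p ≤ n * q := by omega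
    have hq3 : 3 ≤ q := by
      by_contra hlt
      push_neg at hlt
      have h1 : n * q ≤ n * 2 := Nat.mul_le_mul_left _ (by omega)
      omega
    set k := q - 2 with hk
    have hqk : q = k + 2 := by omega
    have hk2p : 2 * p ≤ n * (k + 2) := by rw [← hqk]; exact hnq
    have hk1 : 1 ≤ k := by omega
    have hnk1 : n * (k + 1) ≤ 2 * p - 1 := by
      have h1 : n * q = n * (k + 1) + n := by rw [hqk]; ring
      omega
    have hkp : k ≤ p - 2 := by
      by_contra hgt
      push_neg at hgt
      have h1 : n * p ≤ n * (k + 1) := Nat.mul_le_mul_left _ (by omega)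
      have h2 : 2 * p ≤ n * p := Nat.mul_le_mul_right _ (by omega)
      omega
    by_contra hcon
    push_neg at hcon
    have hAne : A.Nonempty := Finset.card_pos.mp (by omega)
    have hgaplt : ∀ u : (ZMod p)ˣ, gap p (A.image (fun a => (u : ZMod p) * a)) < k := by
      intro u
      have h1 := hcon (u : ZMod p) (Units.ne_zero u)
      by_contra hge
      push_neg at hge
      have h2 : n * (k + 2) ≤ n * (gap p (A.image (fun a => (u : ZMod p) * a)) + 2) :=
        Nat.mul_le_mul_left _ (by omega)
      omega
    have hcov : ∀ (u : (ZMod p)ˣ) (y₀ : ZMod p), ∃ a ∈ A, ∃ i ∈ Finset.Icc 1 k,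
        (a - y₀) * (u : ZMod p) = ((i : ℕ) : ZMod p) := by
      intro u y₀
      by_contra hno
      push_neg at hno
      have hle : k ≤ gap p (A.image (fun a => (u : ZMod p) * a)) := by
        apply GapProofAux.le_gap (hAne.image _) (t := (u : ZMod p) * y₀)
        intro i hi1 hik hmem
        obtain ⟨a, ha, hEq⟩ := Finset.mem_image.mp hmem
        apply hno a ha i (Finset.mem_Icc.mpr ⟨hi1, hik⟩)
        linear_combination hEq
      have := hgaplt u
      omega
    exact (GapProofAux.main_case hn2 hAp hk1 hkp hnk1 hcov).elim
  · refine ⟨1, one_ne_zero, ?_⟩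
    rw [ge_iff_le]
    calc 2 * p ≤ A.card * 2 := by omega
      _ ≤ A.card * (gap p (A.image (fun a => (1 : ZMod p) * a)) + 2) :=
        Nat.mul_le_mul_left _ (by omega)
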